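/- Let X ⊆ ℝⁿ and Y ⊆ ℝᵐ be subsets and let φ : X → Y be a bi-Lipschitz bijection (there is λ ≥ 1 with (1/λ)·‖x₁−x₂‖ ≤ ‖φ(x₁)−φ(x₂)‖ ≤ λ·‖x₁−x₂‖ for all x₁,x₂ ∈ X). Then there exists a bi-Lipschitz homeomorphism Φ : ℝⁿ × ℝᵐ → ℝⁿ × ℝᵐ (a bijection such that Φ and Φ⁻¹ are Lipschitz) satisfying Φ(x,0) = (0, φ(x)) for every x ∈ X; in particular Φ maps X × {0} onto {0} × Y. -/

import Mathlib

open scoped NNReal ENNReal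

open Set Function

/-- Lipschitz extension into Euclidean space (via coordinatewise McShane extension). -/
lemma exists_lip_ext {α : Type*} [PseudoMetricSpace α] {m : ℕ}
    {f : α → EuclideanSpace ℝ (Fin m)} {s : Set α} {K : ℝ≥0}
    (hf : LipschitzOnWith K f s) :
    ∃ g : α → EuclideanSpace ℝ (Fin m), (∃ K' : ℝ≥0, LipschitzWith K' g) ∧ Set.EqOn f g s := by
  have hf' : LipschitzOnWith (1 * K) (fun x => (WithLp.equiv 2 (Fin m → ℝ)) (f x)) s :=
    (PiLp.lipschitzWith_ofLp 2 _).comp_lipschitzOnWith hf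
  obtain ⟨g', hg'lip, hg'eq⟩ := hf'.extend_pi
  set C : ℝ≥0 := (m : ℝ≥0) ^ (2 : ℝ)⁻¹ with hC
  refine ⟨fun x => (WithLp.equiv 2 (Fin m → ℝ)).symm (g' x), ⟨C * (1 * K), ?_⟩, fun x hx => ?_⟩
  · intro x y
    calc edist ((WithLp.equiv 2 (Fin m → ℝ)).symm (g' x))
          ((WithLp.equiv 2 (Fin m → ℝ)).symm (g' y))
        ≤ C * edist (g' x) (g' y) := by
          have := PiLp.antilipschitzWith_ofLp 2 (fun _ : Fin m => ℝ)
            ((WithLp.equiv 2 (Fin m → ℝ)).symm (g' x))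
            ((WithLp.equiv 2 (Fin m → ℝ)).symm (g' y))
          simpa using this
      _ ≤ C * ((1 * K) * edist x y) := by
          gcongr
          exact hg'lip x y
      _ = ↑(C * (1 * K)) * edist x y := by push_cast; ring
  · have := hg'eq hx
    simpa using congrArg (WithLp.equiv 2 (Fin m → ℝ)).symm this

/-- A bi-Lipschitz bijection `φ : X → Y` between subsets `X ⊆ ℝⁿ` and `Y ⊆ ℝᵐ` extends to a
bi-Lipschitz homeomorphism `Φ` of `ℝⁿ × ℝᵐ` with `Φ(x,0) = (0, φ(x))` for all `x ∈ X`;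
in particular `Φ` maps `X × {0}` onto `{0} × Y`. -/
theorem bilipschitz_ambient_extension {n m : ℕ}
    (X : Set (EuclideanSpace ℝ (Fin n))) (Y : Set (EuclideanSpace ℝ (Fin m)))
    (φ : EuclideanSpace ℝ (Fin n) → EuclideanSpace ℝ (Fin m))
    (hbij : Set.BijOn φ X Y)
    (lam : ℝ) (hlam : 1 ≤ lam)
    (hbl : ∀ x₁ ∈ X, ∀ x₂ ∈ X,
      (1 / lam) * ‖x₁ - x₂‖ ≤ ‖φ x₁ - φ x₂‖ ∧ ‖φ x₁ - φ x₂‖ ≤ lam * ‖x₁ - x₂‖) :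
    ∃ Φ Ψ : EuclideanSpace ℝ (Fin n) × EuclideanSpace ℝ (Fin m) →
            EuclideanSpace ℝ (Fin n) × EuclideanSpace ℝ (Fin m),
      Function.LeftInverse Ψ Φ ∧ Function.RightInverse Ψ Φ ∧
      (∃ K : ℝ≥0, LipschitzWith K Φ) ∧ (∃ K : ℝ≥0, LipschitzWith K Ψ) ∧
      (∀ x ∈ X, Φ (x, 0) = (0, φ x)) ∧
      Φ '' (X ×ˢ ({0} : Set (EuclideanSpace ℝ (Fin m)))) =
        ({0} : Set (EuclideanSpace ℝ (Fin n))) ×ˢ Y := by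
  have hlam0 : 0 < lam := lt_of_lt_of_le one_pos hlam
  -- φ is Lipschitz on X
  have hφlip : LipschitzOnWith lam.toNNReal φ X := by
    apply LipschitzOnWith.of_dist_le_mul
    intro x hx y hy
    rw [dist_eq_norm, dist_eq_norm, Real.coe_toNNReal _ hlam0.le]
    exact (hbl x hx y hy).2
  -- the inverse map ψ on Y
  set ψ : EuclideanSpace ℝ (Fin m) → EuclideanSpace ℝ (Fin n) := Function.invFunOn φ X with hψ
  have hψ_mem : ∀ y ∈ Y, ψ y ∈ X := fun y hy => by
    obtain ⟨x, hx, hxy⟩ := hbij.surjOn hy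
    exact Function.invFunOn_mem ⟨x, hx, hxy⟩
  have hψ_eq : ∀ y ∈ Y, φ (ψ y) = y := fun y hy => by
    obtain ⟨x, hx, hxy⟩ := hbij.surjOn hy
    exact Function.invFunOn_eq ⟨x, hx, hxy⟩
  have hψφ : ∀ x ∈ X, ψ (φ x) = x := fun x hx => hbij.injOn.leftInvOn_invFunOn hx
  have hψlip : LipschitzOnWith lam.toNNReal ψ Y := by
    apply LipschitzOnWith.of_dist_le_mul
    intro y₁ hy₁ y₂ hy₂
    rw [dist_eq_norm, dist_eq_norm, Real.coe_toNNReal _ hlam0.le]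
    have h := (hbl (ψ y₁) (hψ_mem _ hy₁) (ψ y₂) (hψ_mem _ hy₂)).1
    rw [hψ_eq _ hy₁, hψ_eq _ hy₂] at h
    have h2 := mul_le_mul_of_nonneg_left h hlam0.le
    rw [← mul_assoc, mul_one_div, div_self hlam0.ne', one_mul] at h2
    exact h2
  obtain ⟨φt, ⟨Kφ, hφt⟩, hφteq⟩ := exists_lip_ext hφlip
  obtain ⟨ψt, ⟨Kψ, hψt⟩, hψteq⟩ := exists_lip_ext hψlip
  set Φ : EuclideanSpace ℝ (Fin n) × EuclideanSpace ℝ (Fin m) →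
      EuclideanSpace ℝ (Fin n) × EuclideanSpace ℝ (Fin m) :=
    fun p => (p.1 - ψt (p.2 + φt p.1), p.2 + φt p.1) with hΦ
  set Ψ : EuclideanSpace ℝ (Fin n) × EuclideanSpace ℝ (Fin m) →
      EuclideanSpace ℝ (Fin n) × EuclideanSpace ℝ (Fin m) :=
    fun q => (q.1 + ψt q.2, q.2 - φt (q.1 + ψt q.2)) with hΨ
  have hleft : Function.LeftInverse Ψ Φ := by
    intro p
    simp only [hΦ, hΨ, sub_add_cancel]
    ext <;> simp
  have hright : Function.RightInverse Ψ Φ := by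
    intro q
    simp only [hΦ, hΨ, add_sub_cancel]
    ext <;> simp [sub_add_cancel]
  have hΦx : ∀ x ∈ X, Φ (x, 0) = (0, φ x) := by
    intro x hx
    have h1 : φt x = φ x := (hφteq hx).symm
    have h2 : ψt (φ x) = x := by
      rw [← hψteq (hbij.mapsTo hx), hψφ x hx]
    simp only [hΦ, zero_add, h1, h2, sub_self]
  -- Lipschitz bounds
  have hφ1 : LipschitzWith Kφ fun p : EuclideanSpace ℝ (Fin n) × EuclideanSpace ℝ (Fin m) =>
      φt p.1 := by simpa [Function.comp_def] using hφt.comp (LipschitzWith.prod_fst (α := EuclideanSpace ℝ (Fin n)) (β := EuclideanSpace ℝ (Fin m)))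
  have hψ1 : LipschitzWith Kψ fun q : EuclideanSpace ℝ (Fin n) × EuclideanSpace ℝ (Fin m) =>
      ψt q.2 := by simpa [Function.comp_def] using hψt.comp (LipschitzWith.prod_snd (α := EuclideanSpace ℝ (Fin n)) (β := EuclideanSpace ℝ (Fin m)))
  have hsum : LipschitzWith (1 + Kφ) fun p : EuclideanSpace ℝ (Fin n) × EuclideanSpace ℝ (Fin m) =>
      p.2 + φt p.1 :=
    LipschitzWith.prod_snd.add hφ1
  have hΦlip : ∃ K : ℝ≥0, LipschitzWith K Φ :=
    ⟨max (1 + Kψ * (1 + Kφ)) (1 + Kφ),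
      (LipschitzWith.prod_fst.sub ((hψt.comp hsum))).prodMk hsum⟩
  have hsum' : LipschitzWith (1 + Kψ) fun q : EuclideanSpace ℝ (Fin n) × EuclideanSpace ℝ (Fin m) =>
      q.1 + ψt q.2 :=
    LipschitzWith.prod_fst.add hψ1
  have hΨlip : ∃ K : ℝ≥0, LipschitzWith K Ψ :=
    ⟨max (1 + Kψ) (1 + Kφ * (1 + Kψ)),
      hsum'.prodMk (LipschitzWith.prod_snd.sub (hφt.comp hsum'))⟩
  refine ⟨Φ, Ψ, hleft, hright, hΦlip, hΨlip, hΦx, ?_⟩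
  ext ⟨u, v⟩
  constructor
  · rintro ⟨⟨x, y⟩, ⟨hx, hy⟩, hxy⟩
    simp only [Set.mem_singleton_iff] at hy
    subst hy
    rw [hΦx x hx] at hxy
    obtain ⟨rfl, rfl⟩ := Prod.mk.injEq .. ▸ Prod.ext_iff.mp hxy.symm
    exact ⟨rfl, hbij.mapsTo hx⟩
  · rintro ⟨hu, hv⟩
    simp only [Set.mem_singleton_iff] at hu
    subst hu
    refine ⟨(ψ v, 0), ⟨hψ_mem v hv, rfl⟩, ?_⟩
    rw [hΦx _ (hψ_mem v hv), hψ_eq v hv]
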